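/- Let v ∈ ℝᵐ, and for each k let Xᵏ ⊆ ℝⁿ be finite nonempty with minimum reduced costs c̄ᵏ = min_{x∈Xᵏ}((cᵏ - πᵀAᵏ)·x - μ_k). Suppose (π, μ) is a feasible dual solution of the restricted master problem with objective value z_RMP (equal to the RMP optimum by LP duality). Then z_RMP + ∑_{k∈K} c̄ᵏ is a lower bound on the optimal value of the full Dantzig-Wolfe master problem. -/

import Mathlib

/-- The Lagrangian (Dantzig–Wolfe) lower bound: if `(π, μ)` is a feasible dual
solution of the restricted master problem (π ≥ 0 and nonnegative reduced costs
on the columns of the RMP) with dual objective value `z_RMP = b·π + ∑ μ_k`,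
and `c̄ᵏ` is the minimum reduced cost of subproblem `k`, then
`z_RMP + ∑_k c̄ᵏ` bounds the optimal value of the full master problem from
below, i.e. every primal feasible `λ` of the full master has objective at
least this value. -/
theorem stmt_9 {m n : ℕ} {K : Type*} [Fintype K]
    (c : K → Fin n → ℝ) (A : K → Matrix (Fin m) (Fin n) ℝ) (b : Fin m → ℝ)
    (X : K → Finset (Fin n → ℝ)) (hXne : ∀ k, (X k).Nonempty)
    (R : K → Finset (Fin n → ℝ)) -- columns currently in the RMP
    (hRX : ∀ k, R k ⊆ X k)
    (π : Fin m → ℝ) (μ : K → ℝ)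
    (hπ : ∀ i, 0 ≤ π i)
    (hdualfeas : ∀ k, ∀ χ ∈ R k, (∑ j, (c k j - ∑ i, π i * A k i j) * χ j) - μ k ≥ 0)
    (zRMP : ℝ) (hz : zRMP = (∑ i, b i * π i) + ∑ k, μ k)
    (cbar : K → ℝ)
    (hcbar : ∀ k, cbar k =
      (X k).inf' (hXne k) (fun x => (∑ j, (c k j - ∑ i, π i * A k i j) * x j) - μ k)) :
    ∀ lam : K → (Fin n → ℝ) → ℝ,
      (∀ k x, 0 ≤ lam k x) →
      (∀ i : Fin m, ∑ k, ∑ x ∈ X k, (∑ j, A k i j * x j) * lam k x ≥ b i) →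
      (∀ k, ∑ x ∈ X k, lam k x = 1) →
      zRMP + ∑ k, cbar k ≤
        ∑ k, ∑ x ∈ X k, (∑ j, c k j * x j) * lam k x := by
  intro lam hlam hcov hconv
  set f : K → (Fin n → ℝ) → ℝ :=
    fun k x => (∑ j, (c k j - ∑ i, π i * A k i j) * x j) - μ k with hf
  have hid : ∀ k (x : Fin n → ℝ),
      (∑ j, c k j * x j)
        = f k x + (∑ i, π i * ∑ j, A k i j * x j) + μ k := by
    intro k x
    have hswap : ∑ j, (∑ i, π i * A k i j) * x j
        = ∑ i, π i * ∑ j, A k i j * x j := by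
      simp_rw [Finset.sum_mul, Finset.mul_sum, mul_assoc]
      exact Finset.sum_comm
    simp only [hf, sub_mul, Finset.sum_sub_distrib, hswap]
    ring
  have key : ∀ k, ∑ x ∈ X k, (∑ j, c k j * x j) * lam k x
      = (∑ x ∈ X k, f k x * lam k x)
        + (∑ i, π i * ∑ x ∈ X k, (∑ j, A k i j * x j) * lam k x)
        + μ k := by
    intro k
    have : ∀ x ∈ X k, (∑ j, c k j * x j) * lam k x
        = f k x * lam k x + (∑ i, π i * ((∑ j, A k i j * x j) * lam k x))
          + μ k * lam k x := by
      intro x _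
      rw [hid k x]
      simp_rw [← mul_assoc]
      rw [← Finset.sum_mul]
      ring
    rw [Finset.sum_congr rfl this]
    rw [Finset.sum_add_distrib, Finset.sum_add_distrib, ← Finset.mul_sum,
      hconv k, mul_one, Finset.sum_comm]
    simp_rw [← Finset.mul_sum]
  calc zRMP + ∑ k, cbar k
      = (∑ k, cbar k) + (∑ i, b i * π i) + ∑ k, μ k := by rw [hz]; ring
    _ ≤ (∑ k, ∑ x ∈ X k, f k x * lam k x)
        + (∑ i, π i * ∑ k, ∑ x ∈ X k, (∑ j, A k i j * x j) * lam k x)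
        + ∑ k, μ k := by
        apply add_le_add_left
        apply add_le_add
        · apply Finset.sum_le_sum
          intro k _
          calc cbar k = ∑ x ∈ X k, cbar k * lam k x := by
                rw [← Finset.mul_sum, hconv k, mul_one]
          _ ≤ ∑ x ∈ X k, f k x * lam k x := by
                apply Finset.sum_le_sum
                intro x hx
                have : cbar k ≤ f k x := by
                  rw [hcbar k]; exact Finset.inf'_le _ hx
                exact mul_le_mul_of_nonneg_right this (hlam k x)
        · apply Finset.sum_le_sum
          intro i _
          rw [mul_comm (b i)]
          exact mul_le_mul_of_nonneg_left (hcov i) (hπ i)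
    _ = ∑ k, ∑ x ∈ X k, (∑ j, c k j * x j) * lam k x := by
        simp_rw [key, Finset.sum_add_distrib]
        rw [Finset.sum_comm]
        simp_rw [← Finset.mul_sum]
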